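/- Laxator of the relative entropy loss model: let X, X', M, M', Y, Y' be finite types, ω a distribution on X × X' with ω(x,x') > 0 for all x, x', with marginals ω_X and ω_{X'}, and let c : X → Dist(M × Y) and d : X' → Dist(M' × Y') be channels with c x (m,y) > 0 and d x' (m',y') > 0 everywhere. Let c' : Y → Dist(X × M) and d' : Y' → Dist(X' × M') be arbitrary channels (approximate inverses). Define p_c(y) = ∑_{x,m} ω_X(x) · c x (m,y), c†(y)(x,m) = ω_X(x) · c x (m,y) / p_c(y), and analogously p_d, d†; define the tensor channel (c ⊗ d)(x,x')((m,m'),(y,y')) = c x (m,y) · d x' (m',y'), its pushforward p_{cd}(y,y') = ∑_{x,x',m,m'} ω(x,x') · c x (m,y) · d x' (m',y'), and its exact inversion (c ⊗ d)†(y,y')((x,m),(x',m')) = ω(x,x') · c x (m,y) · d x' (m',y') / p_{cd}(y,y'); and define the product approximate inverse (c' ⊗ d')(y,y')((x,m),(x',m')) = c'(y)(x,m) · d'(y')(x',m'). Then for all y, y': D((c' ⊗ d')(y,y'), (c ⊗ d)†(y,y')) = D(c'(y), c†(y)) + D(d'(y'), d†(y')) + λ, where λ = ∑_{x,m,x',m'}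 c'(y)(x,m) · d'(y')(x',m') · log( ω_X(x) · ω_{X'}(x') / ω(x,x') ) + log( p_{cd}(y,y') / (p_c(y) · p_d(y')) ). -/

import Mathlib

open scoped BigOperators

/-- The relative entropy (Kullback–Leibler divergence) between two distributions on a
finite type, `D(p,q) = ∑ z, p z * log (p z / q z)`. -/
noncomputable def relEnt {Z : Type*} [Fintype Z] (p q : Z → ℝ) : ℝ :=
  ∑ z, p z * Real.log (p z / q z)

/-- First marginal of a joint distribution on `X × X'`. -/
noncomputable def margL {X X' : Type*} [Fintype X'] (ω : X × X' → ℝ) (x : X) : ℝ :=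
  ∑ x', ω (x, x')

/-- Second marginal of a joint distribution on `X × X'`. -/
noncomputable def margR {X X' : Type*} [Fintype X] (ω : X × X' → ℝ) (x' : X') : ℝ :=
  ∑ x, ω (x, x')

/-- Pushforward of a prior along a coparameterized channel, discarding the
coparameter: `p_c(y) = ∑ x m, π x * c x (m, y)`. -/
noncomputable def pushCo {X M Y : Type*} [Fintype X] [Fintype M]
    (π : X → ℝ) (c : X → M × Y → ℝ) (y : Y) : ℝ :=
  ∑ x, ∑ m, π x * c x (m, y)

/-- Exact (coparameterized) Bayesian inversion: `c†(y)(x,m) = π x * c x (m,y) / p_c(y)`. -/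
noncomputable def exactInv {X M Y : Type*} [Fintype X] [Fintype M]
    (π : X → ℝ) (c : X → M × Y → ℝ) (y : Y) (xm : X × M) : ℝ :=
  π xm.1 * c xm.1 (xm.2, y) / pushCo π c y

/-- Pushforward of a joint prior `ω` along the tensor of two coparameterized channels. -/
noncomputable def pushTensor {X X' M M' Y Y' : Type*}
    [Fintype X] [Fintype X'] [Fintype M] [Fintype M']
    (ω : X × X' → ℝ) (c : X → M × Y → ℝ) (d : X' → M' × Y' → ℝ) (y : Y) (y' : Y') : ℝ :=
  ∑ x, ∑ x', ∑ m, ∑ m', ω (x, x') * c x (m, y) * d x' (m', y')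

/-- **Laxator of the relative entropy loss model**: the divergence of the product of
the approximate inverses from the exact inversion of the tensor channel equals the
sum of the componentwise divergences (at the marginal priors) plus the stated
laxity term `λ`. -/
theorem relEnt_laxator
    {X X' M M' Y Y' : Type*}
    [Fintype X] [Fintype X'] [Fintype M] [Fintype M'] [Fintype Y] [Fintype Y']
    (ω : X × X' → ℝ) (c : X → M × Y → ℝ) (d : X' → M' × Y' → ℝ)
    (c' : Y → X × M → ℝ) (d' : Y' → X' × M' → ℝ)
    (hω : ∀ p, 0 < ω p) (hω₁ : ∑ p, ω p = 1)
    (hc : ∀ x my, 0 < c x my) (hc₁ : ∀ x, ∑ my, c x my = 1)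
    (hd : ∀ x' my, 0 < d x' my) (hd₁ : ∀ x', ∑ my, d x' my = 1)
    (hc'₀ : ∀ y xm, 0 ≤ c' y xm) (hc'₁ : ∀ y, ∑ xm, c' y xm = 1)
    (hd'₀ : ∀ y' xm, 0 ≤ d' y' xm) (hd'₁ : ∀ y', ∑ xm, d' y' xm = 1) :
    ∀ (y : Y) (y' : Y'),
      relEnt
          (fun p : (X × M) × (X' × M') => c' y p.1 * d' y' p.2)
          (fun p : (X × M) × (X' × M') =>
            ω (p.1.1, p.2.1) * c p.1.1 (p.1.2, y) * d p.2.1 (p.2.2, y')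
              / pushTensor ω c d y y')
        = relEnt (c' y) (exactInv (margL ω) c y)
          + relEnt (d' y') (exactInv (margR ω) d y')
          + ((∑ x, ∑ m, ∑ x', ∑ m',
                c' y (x, m) * d' y' (x', m')
                  * Real.log (margL ω x * margR ω x' / ω (x, x')))
             + Real.log (pushTensor ω c d y y'
                  / (pushCo (margL ω) c y * pushCo (margR ω) d y'))) := by

  intro y y'
  obtain ⟨⟨x₀, x₀'⟩⟩ : Nonempty (X × X') := by
    by_contra h
    rw [not_nonempty_iff] at h
    rw [Finset.univ_eq_empty, Finset.sum_empty] at hω₁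
    exact one_ne_zero hω₁.symm
  have hXn : Nonempty X := ⟨x₀⟩
  have hX'n : Nonempty X' := ⟨x₀'⟩
  obtain ⟨⟨m₀, _⟩⟩ : Nonempty (M × Y) := by
    by_contra h
    rw [not_nonempty_iff] at h
    have h1 := hc₁ x₀
    rw [Finset.univ_eq_empty, Finset.sum_empty] at h1
    exact one_ne_zero h1.symm
  have hMn : Nonempty M := ⟨m₀⟩
  obtain ⟨⟨m₀', _⟩⟩ : Nonempty (M' × Y') := by
    by_contra h
    rw [not_nonempty_iff] at h
    have h1 := hd₁ x₀'
    rw [Finset.univ_eq_empty, Finset.sum_empty] at h1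
    exact one_ne_zero h1.symm
  have hM'n : Nonempty M' := ⟨m₀'⟩
  have hwl : ∀ x, 0 < margL ω x := fun x =>
    Finset.sum_pos (fun _ _ => hω _) Finset.univ_nonempty
  have hwr : ∀ x', 0 < margR ω x' := fun x' =>
    Finset.sum_pos (fun _ _ => hω _) Finset.univ_nonempty
  have hpc : 0 < pushCo (margL ω) c y :=
    Finset.sum_pos (fun x _ => Finset.sum_pos
      (fun m _ => mul_pos (hwl x) (hc x (m, y))) Finset.univ_nonempty) Finset.univ_nonempty
  have hpd : 0 < pushCo (margR ω) d y' :=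
    Finset.sum_pos (fun x _ => Finset.sum_pos
      (fun m _ => mul_pos (hwr x) (hd x (m, y'))) Finset.univ_nonempty) Finset.univ_nonempty
  have hP : 0 < pushTensor ω c d y y' :=
    Finset.sum_pos (fun x _ => Finset.sum_pos (fun x' _ => Finset.sum_pos (fun m _ =>
      Finset.sum_pos (fun m' _ => mul_pos (mul_pos (hω _) (hc _ _)) (hd _ _))
        Finset.univ_nonempty) Finset.univ_nonempty) Finset.univ_nonempty) Finset.univ_nonempty
  have key : ∀ (xm : X × M) (xm' : X' × M'),
      c' y xm * d' y' xm' * Real.log ((c' y xm * d' y' xm')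
          / (ω (xm.1, xm'.1) * c xm.1 (xm.2, y) * d xm'.1 (xm'.2, y')
              / pushTensor ω c d y y'))
        = d' y' xm' * (c' y xm * Real.log (c' y xm / exactInv (margL ω) c y xm))
          + c' y xm * (d' y' xm' * Real.log (d' y' xm' / exactInv (margR ω) d y' xm'))
          + c' y xm * d' y' xm' * Real.log (margL ω xm.1 * margR ω xm'.1 / ω (xm.1, xm'.1))
          + c' y xm * d' y' xm'
              * Real.log (pushTensor ω c d y y'
                  / (pushCo (margL ω) c y * pushCo (margR ω) d y')) := by
    intro u v
    rcases eq_or_lt_of_le (hc'₀ y u) with ha | ha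
    · simp [← ha]
    rcases eq_or_lt_of_le (hd'₀ y' v) with hb | hb
    · simp [← hb]
    have t1 : 0 < c' y u / exactInv (margL ω) c y u :=
      div_pos ha (div_pos (mul_pos (hwl u.1) (hc u.1 (u.2, y))) hpc)
    have t2 : 0 < d' y' v / exactInv (margR ω) d y' v :=
      div_pos hb (div_pos (mul_pos (hwr v.1) (hd v.1 (v.2, y'))) hpd)
    have t3 : 0 < margL ω u.1 * margR ω v.1 / ω (u.1, v.1) :=
      div_pos (mul_pos (hwl u.1) (hwr v.1)) (hω _)
    have t4 : 0 < pushTensor ω c d y y' / (pushCo (margL ω) c y * pushCo (margR ω) d y') :=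
      div_pos hP (mul_pos hpc hpd)
    have harg : (c' y u * d' y' v)
        / (ω (u.1, v.1) * c u.1 (u.2, y) * d v.1 (v.2, y') / pushTensor ω c d y y')
        = (c' y u / exactInv (margL ω) c y u) * (d' y' v / exactInv (margR ω) d y' v)
          * (margL ω u.1 * margR ω v.1 / ω (u.1, v.1))
          * (pushTensor ω c d y y' / (pushCo (margL ω) c y * pushCo (margR ω) d y')) := by
      rw [exactInv, exactInv]
      have h1 : ω (u.1, v.1) ≠ 0 := (hω _).ne'
      have h2 : c u.1 (u.2, y) ≠ 0 := (hc _ _).ne'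
      have h3 : d v.1 (v.2, y') ≠ 0 := (hd _ _).ne'
      have h4 : pushTensor ω c d y y' ≠ 0 := hP.ne'
      have h5 : margL ω u.1 ≠ 0 := (hwl _).ne'
      have h6 : margR ω v.1 ≠ 0 := (hwr _).ne'
      have h7 : pushCo (margL ω) c y ≠ 0 := hpc.ne'
      have h8 : pushCo (margR ω) d y' ≠ 0 := hpd.ne'
      field_simp
    rw [harg, Real.log_mul (mul_pos (mul_pos t1 t2) t3).ne' t4.ne',
      Real.log_mul (mul_pos t1 t2).ne' t3.ne', Real.log_mul t1.ne' t2.ne']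
    ring
  simp only [relEnt]
  rw [Fintype.sum_prod_type]
  simp only [key]
  simp only [Finset.sum_add_distrib]
  have e1 : (∑ u : X × M, ∑ v : X' × M',
      d' y' v * (c' y u * Real.log (c' y u / exactInv (margL ω) c y u)))
      = ∑ u : X × M, c' y u * Real.log (c' y u / exactInv (margL ω) c y u) := by
    refine Finset.sum_congr rfl fun u _ => ?_
    rw [← Finset.sum_mul, hd'₁, one_mul]
  have e2 : (∑ u : X × M, ∑ v : X' × M',
      c' y u * (d' y' v * Real.log (d' y' v / exactInv (margR ω) d y' v)))
      = ∑ v : X' × M', d' y' v * Real.log (d' y' v / exactInv (margR ω) d y' v) := by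
    simp only [← Finset.mul_sum]
    rw [← Finset.sum_mul, hc'₁, one_mul]
  have e3 : (∑ u : X × M, ∑ v : X' × M',
      c' y u * d' y' v * Real.log (margL ω u.1 * margR ω v.1 / ω (u.1, v.1)))
      = ∑ x, ∑ m, ∑ x', ∑ m', c' y (x, m) * d' y' (x', m')
          * Real.log (margL ω x * margR ω x' / ω (x, x')) := by
    rw [Fintype.sum_prod_type]
    refine Finset.sum_congr rfl fun x _ => Finset.sum_congr rfl fun m _ => ?_
    rw [Fintype.sum_prod_type]
  have e4 : (∑ u : X × M, ∑ v : X' × M', c' y u * d' y' v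
      * Real.log (pushTensor ω c d y y' / (pushCo (margL ω) c y * pushCo (margR ω) d y')))
      = Real.log (pushTensor ω c d y y' / (pushCo (margL ω) c y * pushCo (margR ω) d y')) := by
    simp only [← Finset.sum_mul, ← Finset.mul_sum, hd'₁, mul_one, hc'₁, one_mul]
  rw [e1, e2, e3, e4]
  ring
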